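/- For every prime p and every positive integer n, if z(p) divides n then the p-adic valuation of F_n is at least the p-adic valuation of n, i.e., ν_p(F_n) ≥ ν_p(n). -/

import Mathlib

open scoped BigOperators

/-- `fibZ m` is the rank of appearance of `m`: the least positive `n` with `m ∣ F_n`. -/
noncomputable def fibZ (m : ℕ) : ℕ := sInf {n : ℕ | 0 < n ∧ m ∣ Nat.fib n}

/-- `fibL m = lcm(m, z(m))`. -/
noncomputable def fibL (m : ℕ) : ℕ := Nat.lcm m (fibZ m)

/-- `countIn S x` is the number of elements of `S` in `[1, x]`. -/
noncomputable def countIn (S : Set ℕ) (x : ℝ) : ℕ :=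
  (S ∩ {n : ℕ | 1 ≤ n ∧ (n : ℝ) ≤ x}).ncard

/-- `S` has asymptotic density `a`. -/
def HasDensity (S : Set ℕ) (a : ℝ) : Prop :=
  Filter.Tendsto (fun x : ℝ => (countIn S x : ℝ) / x) Filter.atTop (nhds a)

/-- `fibA k` is the set of positive integers `n` with `gcd(n, F_n) = k`. -/
def fibA (k : ℕ) : Set ℕ := {n : ℕ | 0 < n ∧ Nat.gcd n (Nat.fib n) = k}

/-- descending equal pairs of consecutive Fibonacci residues. -/
lemma fibZ_aux_descend (p : ℕ) :
    ∀ i d : ℕ, ((Nat.fib i : ZMod p) = Nat.fib (i + d) ∧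
        (Nat.fib (i+1) : ZMod p) = Nat.fib (i + d + 1)) →
      (Nat.fib d : ZMod p) = 0 := by
  have key : ∀ j : ℕ, (Nat.fib j : ZMod p) = (Nat.fib (j+2) : ZMod p) - Nat.fib (j+1) := by
    intro j; rw [Nat.fib_add_two]; push_cast; ring
  intro i
  induction i with
  | zero => intro d h; have := h.1; simpa using this.symm
  | succ i ih =>
    intro d h
    obtain ⟨h1, h2⟩ := h
    apply ih d
    refine ⟨?_, by rw [show i+d+1 = i+1+d from by ring]; exact h1⟩
    rw [key i, key (i+d)]
    rw [show i+d+2 = i+1+d+1 from by ring, show i+d+1 = i+1+d from by ring]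
    rw [← h1, ← h2]

/-- There is a small positive index where `p` divides `fib`. -/
lemma exists_fib_dvd_lt_sq (p : ℕ) (hp : p.Prime) :
    ∃ k : ℕ, 0 < k ∧ k < p ^ 2 ∧ p ∣ Nat.fib k := by
  haveI : Fact p.Prime := ⟨hp⟩
  haveI : NeZero p := ⟨hp.ne_zero⟩
  set f : ℕ → ZMod p × ZMod p := fun i => ((Nat.fib i : ZMod p), (Nat.fib (i+1) : ZMod p))
  have hmaps : ∀ i ∈ Finset.range (p ^ 2), f i ∈ (Finset.univ.erase ((0 : ZMod p), (0 : ZMod p))) := by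
    intro i _
    refine Finset.mem_erase.2 ⟨?_, Finset.mem_univ _⟩
    intro hzero
    have h1 : p ∣ Nat.fib i := by
      have := congrArg Prod.fst hzero
      simpa [f, ZMod.natCast_eq_zero_iff] using this
    have h2 : p ∣ Nat.fib (i+1) := by
      have := congrArg Prod.snd hzero
      simpa [f, ZMod.natCast_eq_zero_iff] using this
    have := Nat.fib_coprime_fib_succ i
    have hpd : p ∣ Nat.gcd (Nat.fib i) (Nat.fib (i+1)) := Nat.dvd_gcd h1 h2
    rw [this] at hpd
    have := Nat.le_of_dvd one_pos hpd
    have := hp.two_le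
    omega
  have hcard : (Finset.univ.erase ((0 : ZMod p), (0 : ZMod p))).card < (Finset.range (p ^ 2)).card := by
    rw [Finset.card_erase_of_mem (Finset.mem_univ _), Finset.card_range]
    simp only [Finset.card_univ, Fintype.card_prod, ZMod.card]
    have : 0 < p * p := Nat.mul_pos hp.pos hp.pos
    rw [pow_two]
    omega
  obtain ⟨i, hi, j, hj, hne, hfeq⟩ :=
    Finset.exists_ne_map_eq_of_card_lt_of_maps_to hcard hmaps
  rw [Finset.mem_range] at hi hj
  -- wlog i < j
  rcases Nat.lt_or_ge i j with hij | hij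
  · refine ⟨j - i, by omega, by omega, ?_⟩
    rw [← ZMod.natCast_eq_zero_iff]
    apply fibZ_aux_descend p i (j - i)
    have hji : i + (j - i) = j := by omega
    rw [hji]
    exact ⟨congrArg Prod.fst hfeq, congrArg Prod.snd hfeq⟩
  · have hij' : j < i := by omega
    refine ⟨i - j, by omega, by omega, ?_⟩
    rw [← ZMod.natCast_eq_zero_iff]
    apply fibZ_aux_descend p j (i - j)
    have hji : j + (i - j) = i := by omega
    rw [hji]
    exact ⟨(congrArg Prod.fst hfeq).symm, (congrArg Prod.snd hfeq).symm⟩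

/-- Key congruence: `F_{km}·F_{m+1} ≡ k·F_m·F_{m+1}^k` and `F_{km+1} ≡ F_{m+1}^k` mod `F_m²`. -/
lemma fib_mul_modEq (m : ℕ) (hm : 0 < m) (k : ℕ) :
    ((Nat.fib (k*m) : ℤ) * Nat.fib (m+1)) ≡
      (k : ℤ) * Nat.fib m * (Nat.fib (m+1) : ℤ)^k [ZMOD ((Nat.fib m : ℤ))^2]
    ∧ ((Nat.fib (k*m+1) : ℤ)) ≡ ((Nat.fib (m+1) : ℤ))^k [ZMOD ((Nat.fib m : ℤ))^2] := by
  induction k with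
  | zero => simp [Int.ModEq.refl]
  | succ k ih =>
    obtain ⟨ih1, ih2⟩ := ih
    set F := (Nat.fib m : ℤ) with hF
    set G := (Nat.fib (m+1) : ℤ) with hG
    set a := (Nat.fib (k*m) : ℤ) with ha
    set b := (Nat.fib (k*m+1) : ℤ) with hb
    have hE : (Nat.fib (m-1) : ℤ) = G - F := by
      have h : Nat.fib (m-1) + Nat.fib m = Nat.fib (m+1) := by
        rw [show m+1 = (m-1)+2 from by omega, Nat.fib_add_two, show m-1+1 = m from by omega]
      rw [hG, hF, ← h]; push_cast; ring
    have hsplit : Nat.fib ((k+1)*m) = Nat.fib (k*m) * Nat.fib (m-1) + Nat.fib (k*m+1) * Nat.fib m := by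
      rw [show (k+1)*m = k*m + (m-1) + 1 from by rw [add_mul, one_mul]; omega,
        Nat.fib_add, show m-1+1 = m from by omega]
    have hsplit2 : Nat.fib ((k+1)*m+1)
        = Nat.fib (k*m+1) * Nat.fib (m-1) + Nat.fib (k*m+2) * Nat.fib m := by
      rw [show (k+1)*m+1 = (k*m+1) + (m-1) + 1 from by rw [add_mul, one_mul]; omega,
        Nat.fib_add, show m-1+1 = m from by omega]
    have hfa : Nat.fib (k*m+2) = Nat.fib (k*m) + Nat.fib (k*m+1) := Nat.fib_add_two
    have hdvd : F^2 ∣ a * F := by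
      have hd : Nat.fib m ∣ Nat.fib (k*m) := Nat.fib_dvd _ _ (dvd_mul_left m k)
      rw [pow_two]
      exact mul_dvd_mul (Int.natCast_dvd_natCast.2 hd) dvd_rfl
    have hz : a * F ≡ 0 [ZMOD F^2] := Int.modEq_zero_iff_dvd.2 hdvd
    constructor
    · have H := ((ih1.mul_right G).add (ih2.mul_right (G*F))).sub (hz.mul_right G)
      calc ((Nat.fib ((k+1)*m) : ℤ) * G)
          = a*G*G + b*(G*F) - a*F*G := by rw [hsplit]; push_cast [hE]; ring
        _ ≡ (k : ℤ)*F*G^k*G + G^k*(G*F) - 0*G [ZMOD F^2] := H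
        _ = ((k+1 : ℕ) : ℤ) * F * G^(k+1) := by push_cast; ring
    · have H2 := (ih2.mul_right G).add hz
      calc ((Nat.fib ((k+1)*m+1) : ℤ))
          = b*G + a*F := by rw [hsplit2, hfa]; push_cast [hE]; ring
        _ ≡ G^k*G + 0 [ZMOD F^2] := H2
        _ = G^(k+1) := by ring

/-- Lifting-the-exponent step: if `p^a ∣ F_m` with `a ≥ 1`, then `p^(a+1) ∣ F_{pm}`. -/
lemma pow_succ_dvd_fib_mul (p : ℕ) (hp : p.Prime) (m a : ℕ) (hm : 0 < m) (ha : 1 ≤ a)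
    (hdvd : p^a ∣ Nat.fib m) : p^(a+1) ∣ Nat.fib (p*m) := by
  obtain ⟨hc, -⟩ := fib_mul_modEq m hm p
  set F := (Nat.fib m : ℤ) with hF
  set G := (Nat.fib (m+1) : ℤ) with hG
  have hdF : ((p : ℤ))^a ∣ F := by rw [hF]; exact_mod_cast hdvd
  have h1 : ((p : ℤ))^(a+1) ∣ F^2 := by
    calc ((p : ℤ))^(a+1) ∣ ((p : ℤ))^(2*a) := pow_dvd_pow _ (by omega)
      _ = ((p:ℤ)^a)^2 := by rw [← pow_mul, mul_comm]
      _ ∣ F^2 := pow_dvd_pow_of_dvd hdF 2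
  have h2 : ((p : ℤ))^(a+1) ∣ (p : ℤ) * F * G^p := by
    have h2' : (p:ℤ)^(a+1) ∣ (p:ℤ) * F := by
      rw [pow_succ, mul_comm ((p:ℤ)^a) (p:ℤ)]
      exact mul_dvd_mul_left _ hdF
    exact h2'.mul_right _
  have hdiff : F^2 ∣ (p : ℤ) * F * G^p - (Nat.fib (p*m) : ℤ) * G := hc.dvd
  have hfin : ((p : ℤ))^(a+1) ∣ (Nat.fib (p*m) : ℤ) * G := by
    have := dvd_sub h2 (h1.trans hdiff)
    simpa using this
  have hnat : p^(a+1) ∣ Nat.fib (p*m) * Nat.fib (m+1) := by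
    rw [hG] at hfin; exact_mod_cast hfin
  have hnd : ¬ p ∣ Nat.fib (m+1) := by
    intro hd
    have hpm : p ∣ Nat.fib m := dvd_trans (dvd_pow_self p (by omega)) hdvd
    have := Nat.dvd_gcd hpm hd
    rw [Nat.fib_coprime_fib_succ m] at this
    have := Nat.le_of_dvd one_pos this
    have := hp.two_le
    omega
  have hcop : Nat.Coprime (p^(a+1)) (Nat.fib (m+1)) :=
    (hp.coprime_iff_not_dvd.2 hnd).pow_left _
  exact hcop.dvd_of_dvd_mul_right hnat

/-- Iterated lifting. -/
lemma pow_dvd_fib_pow_mul (p : ℕ) (hp : p.Prime) (m : ℕ) (hm : 0 < m)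
    (h1 : p ∣ Nat.fib m) : ∀ j : ℕ, p^(j+1) ∣ Nat.fib (p^j * m)
  | 0 => by simpa using h1
  | (j+1) => by
    have ih := pow_dvd_fib_pow_mul p hp m hm h1 j
    have hpos : 0 < p^j * m := Nat.mul_pos (Nat.pow_pos (n := j) hp.pos) hm
    have := pow_succ_dvd_fib_mul p hp (p^j * m) (j+1) hpos (by omega) ih
    rwa [show p * (p^j * m) = p^(j+1) * m from by ring] at this

theorem padicValNat_fib_ge (p : ℕ) (hp : p.Prime) (n : ℕ) (hn : 0 < n)
    (h : fibZ p ∣ n) : padicValNat p n ≤ padicValNat p (Nat.fib n) := by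
  haveI : Fact p.Prime := ⟨hp⟩
  obtain ⟨k, hk0, hklt, hkd⟩ := exists_fib_dvd_lt_sq p hp
  have hSne : {n : ℕ | 0 < n ∧ p ∣ Nat.fib n}.Nonempty := ⟨k, hk0, hkd⟩
  have hzmem : fibZ p ∈ {n : ℕ | 0 < n ∧ p ∣ Nat.fib n} := Nat.sInf_mem hSne
  obtain ⟨hz0, hzfib⟩ := hzmem
  have hzle : fibZ p ≤ k := Nat.sInf_le ⟨hk0, hkd⟩
  set z := fibZ p with hzdef
  set e := padicValNat p n with he
  set c := padicValNat p z with hc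
  have hzne : z ≠ 0 := hz0.ne'
  have hnne : n ≠ 0 := hn.ne'
  have hfibne : Nat.fib n ≠ 0 := (Nat.fib_pos.2 hn).ne'
  have hc1 : c ≤ 1 := by
    by_contra hcc
    have h2 : p^2 ∣ z := (pow_dvd_pow p (by omega)).trans pow_padicValNat_dvd
    have := Nat.le_of_dvd hz0 h2
    omega
  have hce : c ≤ e := by
    rw [he, hc, ← padicValNat_dvd_iff_le hnne]
    exact pow_padicValNat_dvd.trans h
  rw [← padicValNat_dvd_iff_le hfibne]
  set m := n / p^(e-c) with hm
  have hdvd1 : p^(e-c) ∣ n := (pow_dvd_pow p (by omega)).trans pow_padicValNat_dvd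
  have hnm : p^(e-c) * m = n := Nat.mul_div_cancel' hdvd1
  have hmpos : 0 < m := by
    rcases Nat.eq_zero_or_pos m with h0 | h0
    · rw [h0, mul_zero] at hnm; omega
    · exact h0
  set z' := z / p^c with hz'
  have hzfact : p^c * z' = z := by
    rw [hz', hc, ← Nat.factorization_def z hp]
    exact Nat.ordProj_mul_ordCompl_eq_self z p
  have hcopz' : Nat.Coprime p z' := by
    rw [hz', hc, ← Nat.factorization_def z hp]
    exact Nat.coprime_ordCompl hp hzne
  have hz'm : z' ∣ m := by
    have h1 : z' ∣ p^(e-c) * m := by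
      rw [hnm]
      exact (Dvd.intro_left (p^c) hzfact).trans h
    exact ((hcopz'.symm).pow_right _).dvd_of_dvd_mul_left h1
  have hpcm : p^c ∣ m := by
    have h2 : p^(e-c) * p^c ∣ p^(e-c) * m := by
      rw [hnm, ← pow_add, show e-c+c = e from by omega]
      exact pow_padicValNat_dvd
    exact (Nat.mul_dvd_mul_iff_left (Nat.pow_pos hp.pos)).1 h2
  have hzm : z ∣ m := by
    rw [← hzfact]
    exact Nat.Coprime.mul_dvd_of_dvd_of_dvd (hcopz'.pow_left c) hpcm hz'm
  have hpfibm : p ∣ Nat.fib m := hzfib.trans (Nat.fib_dvd z m hzm)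
  have hiter := pow_dvd_fib_pow_mul p hp m hmpos hpfibm (e-c)
  rw [hnm] at hiter
  exact (pow_dvd_pow p (by omega)).trans hiter
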